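/- arXiv:2205.07487 — 2 statements merged into one kernel-verified Lean document; each statement's English description precedes it below -/
import Mathlib

section
/- With θ(t,λ) = max{0, t^{-1}p₀(tλ) − 1} for λ ≥ 0 (p₀ as above), θ(t,·) vanishes precisely when: |λ| ≤ β_c/(2t) + 1/β_c if t ≥ β_c²/2, and |λ| ≤ √(2/t) if t < β_c²/2. Moreover at these boundary values the right derivative ∂_λθ jumps from 0 to a strictly positive value (first-order transition). -/
noncomputable def βc : ℝ := Real.sqrt (2 * Real.log 2)

noncomputable def p0 (β : ℝ) : ℝ := if β ≤ βc then β ^ 2 / 2 else β * βc - Real.log 2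

noncomputable def θ (t l : ℝ) : ℝ := max 0 (t⁻¹ * p0 (t * |l|) - 1)

lemma log2_pos : 0 < Real.log 2 := Real.log_pos (by norm_num)

lemma βc_pos : 0 < βc := Real.sqrt_pos.2 (by linarith [log2_pos])

lemma βc_sq : βc ^ 2 = 2 * Real.log 2 := Real.sq_sqrt (by linarith [log2_pos])

lemma p0_le_iff (t : ℝ) (ht : 0 < t) (hln : Real.log 2 ≤ t) (β : ℝ) (hβ : 0 ≤ β) :
    p0 β ≤ t ↔ β ≤ t / βc + βc / 2 := by
  have hb := βc_pos
  have hsq := βc_sq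
  have hB : βc ≤ t / βc + βc / 2 := by
    rw [div_add_div _ _ (ne_of_gt hb) (by norm_num), le_div_iff₀ (by positivity)]
    nlinarith
  constructor
  · intro h
    by_contra hc
    push_neg at hc
    have hβc : βc < β := lt_of_le_of_lt hB hc
    rw [p0, if_neg (not_le.2 hβc)] at h
    have h2 := mul_lt_mul_of_pos_right hc hb
    have h3 : (t / βc + βc / 2) * βc = t + Real.log 2 := by field_simp; nlinarith
    linarith
  · intro h
    by_cases hq : β ≤ βc
    · rw [p0, if_pos hq]; nlinarith
    · rw [p0, if_neg hq]
      push_neg at hq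
      have h2 := mul_le_mul_of_nonneg_right h (le_of_lt hb)
      have h3 : (t / βc + βc / 2) * βc = t + Real.log 2 := by field_simp; nlinarith
      linarith

lemma p0_le_iff' (t : ℝ) (ht : 0 < t) (hln : t < Real.log 2) (β : ℝ) (hβ : 0 ≤ β) :
    p0 β ≤ t ↔ β ≤ Real.sqrt (2 * t) := by
  have hb := βc_pos
  have hsq := βc_sq
  have hBnn : (0:ℝ) ≤ Real.sqrt (2 * t) := Real.sqrt_nonneg _
  have hBsq : Real.sqrt (2 * t) ^ 2 = 2 * t := Real.sq_sqrt (by linarith)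
  have hBlt : Real.sqrt (2 * t) < βc := by
    apply Real.sqrt_lt_sqrt (by linarith); linarith
  constructor
  · intro h
    by_cases hq : β ≤ βc
    · rw [p0, if_pos hq] at h; nlinarith
    · rw [p0, if_neg hq] at h
      push_neg at hq
      nlinarith
  · intro h
    rw [p0, if_pos (le_of_lt (lt_of_le_of_lt h hBlt))]
    nlinarith

lemma θ_eq_zero_iff (t : ℝ) (ht : 0 < t) (l : ℝ) :
    θ t l = 0 ↔ p0 (t * |l|) ≤ t := by
  rw [θ, max_eq_left_iff, sub_nonpos, inv_mul_eq_div, div_le_one ht]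

/-- The Active phase: `θ(t,·)` vanishes exactly for `|λ| ≤ β_c/(2t) + 1/β_c` when
`t ≥ β_c²/2`, and for `|λ| ≤ √(2/t)` when `t < β_c²/2`; at the boundary value the
left derivative is `0` while the right derivative is strictly positive
(first-order transition). -/
theorem stmt8 (t : ℝ) (ht : 0 < t) :
    (∀ l : ℝ, θ t l = 0 ↔
      (if βc ^ 2 / 2 ≤ t then |l| ≤ βc / (2 * t) + 1 / βc else |l| ≤ Real.sqrt (2 / t))) ∧
    (∀ lstar : ℝ,
      lstar = (if βc ^ 2 / 2 ≤ t then βc / (2 * t) + 1 / βc else Real.sqrt (2 / t)) →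
      HasDerivWithinAt (θ t) 0 (Set.Iic lstar) lstar ∧
      ∃ d > 0, HasDerivWithinAt (θ t) d (Set.Ici lstar) lstar) := by
  have hb := βc_pos
  have hsq := βc_sq
  have hcond : (βc ^ 2 / 2 ≤ t) ↔ Real.log 2 ≤ t := by
    rw [hsq]; constructor <;> intro h <;> linarith
  have hst : Real.sqrt (2 * t) = t * Real.sqrt (2 / t) := by
    rw [show (2 : ℝ) * t = t ^ 2 * (2 / t) by field_simp,
      Real.sqrt_mul (by positivity), Real.sqrt_sq ht.le]
  have part1 : ∀ l : ℝ, θ t l = 0 ↔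
      (if βc ^ 2 / 2 ≤ t then |l| ≤ βc / (2 * t) + 1 / βc else |l| ≤ Real.sqrt (2 / t)) := by
    intro l
    rw [θ_eq_zero_iff t ht]
    by_cases hc : βc ^ 2 / 2 ≤ t
    · rw [if_pos hc, p0_le_iff t ht (hcond.1 hc) _ (by positivity),
        show t / βc + βc / 2 = t * (βc / (2 * t) + 1 / βc) by field_simp; ring,
        mul_le_mul_iff_right₀ ht]
    · have hln : t < Real.log 2 := by
        by_contra h
        exact hc (hcond.2 (not_lt.1 h))
      rw [if_neg hc, p0_le_iff' t ht hln _ (by positivity), hst, mul_le_mul_iff_right₀ ht]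
  refine ⟨part1, ?_⟩
  intro lstar hls
  have hLpos : 0 < lstar := by
    rw [hls]; split_ifs with h
    · positivity
    · exact Real.sqrt_pos.2 (by positivity)
  have hθL : θ t lstar = 0 := by
    refine (part1 lstar).2 ?_
    rw [abs_of_pos hLpos, hls]
    split_ifs <;> exact le_refl _
  have hleft : HasDerivWithinAt (θ t) 0 (Set.Iic lstar) lstar := by
    have hev : θ t =ᶠ[nhdsWithin lstar (Set.Iic lstar)] fun _ => 0 := by
      filter_upwards [Filter.inter_mem self_mem_nhdsWithin
        (mem_nhdsWithin_of_mem_nhds (Ioi_mem_nhds (neg_lt_self hLpos)))] with x hx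
      refine (part1 x).2 ?_
      have habs : |x| ≤ lstar := abs_le.2 ⟨hx.2.le, hx.1⟩
      rw [hls] at habs
      split_ifs at habs ⊢ <;> exact habs
    exact (hasDerivWithinAt_const lstar _ 0).congr_of_eventuallyEq hev hθL
  refine ⟨hleft, ?_⟩
  by_cases hc : βc ^ 2 / 2 ≤ t
  · -- linear regime
    have hls' : lstar = βc / (2 * t) + 1 / βc := by rw [hls, if_pos hc]
    have hln : Real.log 2 ≤ t := hcond.1 hc
    have htl : βc ≤ t * lstar := by
      rw [hls', show t * (βc / (2 * t) + 1 / βc) = βc / 2 + t / βc by field_simp,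
        div_add_div _ _ two_ne_zero (ne_of_gt hb), le_div_iff₀ (by positivity)]
      nlinarith
    have h1 : βc * lstar = Real.log 2 / t + 1 := by
      rw [hls']; field_simp; linear_combination hsq
    have heq : ∀ x ∈ Set.Ici lstar, θ t x = βc * x - t⁻¹ * Real.log 2 - 1 := by
      intro x hx
      have hx0 : 0 < x := lt_of_lt_of_le hLpos hx
      have htx : βc ≤ t * x := le_trans htl (by nlinarith [Set.mem_Ici.1 hx])
      have hp : p0 (t * x) = t * x * βc - Real.log 2 := by
        rw [p0]; split_ifs with h
        · have hEq : t * x = βc := le_antisymm h htx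
          rw [hEq]; nlinarith
        · rfl
      rw [θ, abs_of_pos hx0, hp,
        show t⁻¹ * (t * x * βc - Real.log 2) - 1 = βc * x - t⁻¹ * Real.log 2 - 1 by
          field_simp]
      refine max_eq_right ?_
      have h2 : βc * lstar ≤ βc * x := by nlinarith [Set.mem_Ici.1 hx]
      have h3 : t⁻¹ * Real.log 2 = Real.log 2 / t := by ring
      linarith
    have hg : HasDerivAt (fun l : ℝ => βc * l - t⁻¹ * Real.log 2 - 1) βc lstar := by
      simpa using (((hasDerivAt_id lstar).const_mul βc).sub_const
        (t⁻¹ * Real.log 2)).sub_const 1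
    exact ⟨βc, hb, hg.hasDerivWithinAt.congr heq (heq lstar Set.self_mem_Ici)⟩
  · -- quadratic regime
    have hls' : lstar = Real.sqrt (2 / t) := by rw [hls, if_neg hc]
    have hln : t < Real.log 2 := by
      by_contra h
      exact hc (hcond.2 (not_lt.1 h))
    have hL2 : lstar ^ 2 = 2 / t := by rw [hls']; exact Real.sq_sqrt (by positivity)
    have htlt : t * lstar < βc := by
      rw [hls', ← hst]
      exact Real.sqrt_lt_sqrt (by linarith) (by linarith)
    have hlt : lstar < βc / t := by rw [lt_div_iff₀ ht]; linarith [htlt]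
    have hmem : Set.Ici lstar ∩ Set.Iio (βc / t) ∈ nhdsWithin lstar (Set.Ici lstar) :=
      Filter.inter_mem self_mem_nhdsWithin (mem_nhdsWithin_of_mem_nhds (Iio_mem_nhds hlt))
    have hev : θ t =ᶠ[nhdsWithin lstar (Set.Ici lstar)] fun l => t * l ^ 2 / 2 - 1 := by
      filter_upwards [hmem] with x hx
      have hx0 : 0 < x := lt_of_lt_of_le hLpos hx.1
      have htx : t * x ≤ βc := by
        have := hx.2; rw [Set.mem_Iio, lt_div_iff₀ ht] at this; linarith
      have hp : p0 (t * x) = (t * x) ^ 2 / 2 := by rw [p0, if_pos htx]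
      rw [θ, abs_of_pos hx0, hp,
        show t⁻¹ * ((t * x) ^ 2 / 2) - 1 = t * x ^ 2 / 2 - 1 by field_simp]
      refine max_eq_right ?_
      have h2 : lstar ^ 2 ≤ x ^ 2 := by nlinarith [hx.1, Set.mem_Ici.1 hx.1]
      have h3 : t * lstar ^ 2 / 2 = 1 := by rw [hL2]; field_simp
      nlinarith
    have hg : HasDerivAt (fun l : ℝ => t * l ^ 2 / 2 - 1) (t * lstar) lstar := by
      have h := (((hasDerivAt_pow 2 lstar).const_mul t).div_const 2).sub_const 1
      refine h.congr_deriv ?_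
      norm_num; ring
    have hx0 : θ t lstar = t * lstar ^ 2 / 2 - 1 := by
      rw [hθL, hL2]; field_simp; norm_num
    exact ⟨t * lstar, by positivity,
      hg.hasDerivWithinAt.congr_of_eventuallyEq hev hx0⟩
end

section
/- For any t > 0 the function λ ↦ θ(t,λ) := max{0, t^{-1}p₀(t|λ|) − 1} is convex on ℝ and even, and it is differentiable everywhere except on the first-order transition line: at λ* = β_c/(2t) + 1/β_c (when t ≥ β_c²/2) or λ* = √(2/t) (when t < β_c²/2), the left derivative is 0 while the right derivative is strictly positive. -/
lemma hasDerivAt_p0 (β : ℝ) : HasDerivAt p0 (min β βc) β := by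
  have hq : ∀ x : ℝ, HasDerivAt (fun y : ℝ => y ^ 2 / 2) x x := by
    intro x
    simpa using (hasDerivAt_pow 2 x).div_const 2
  have hl : ∀ x : ℝ, HasDerivAt (fun y : ℝ => y * βc - Real.log 2) βc x := by
    intro x
    simpa using ((hasDerivAt_id x).mul_const βc).sub_const (Real.log 2)
  rcases lt_trichotomy β βc with h | h | h
  · rw [min_eq_left h.le]
    refine (hq β).congr_of_eventuallyEq ?_
    filter_upwards [isOpen_Iio.eventually_mem (show β ∈ Set.Iio βc from h)] with y hy
    simp only [p0, if_pos (le_of_lt (Set.mem_Iio.1 hy))]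
  · subst h
    rw [min_self]
    have h1 : HasDerivWithinAt p0 βc (Set.Iic βc) βc := by
      refine ((hq βc).hasDerivWithinAt.congr (fun y hy => ?_) ?_)
      · simp only [p0, if_pos (Set.mem_Iic.1 hy)]
      · simp only [p0, if_pos le_rfl]
    have h2 : HasDerivWithinAt p0 βc (Set.Ici βc) βc := by
      refine ((hl βc).hasDerivWithinAt.congr (fun y hy => ?_) ?_)
      · rcases eq_or_lt_of_le (Set.mem_Ici.1 hy) with rfl | hy'
        · simp only [p0, if_pos le_rfl]
          nlinarith [βc_sq]
        · simp [p0, not_le.2 hy']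
      · simp only [p0, if_pos le_rfl]
        nlinarith [βc_sq]
    have := h1.union h2
    rwa [Set.Iic_union_Ici, hasDerivWithinAt_univ] at this
  · rw [min_eq_right h.le]
    refine (hl β).congr_of_eventuallyEq ?_
    filter_upwards [isOpen_Ioi.eventually_mem (show β ∈ Set.Ioi βc from h)] with y hy
    simp only [p0, if_neg (not_le.2 (Set.mem_Ioi.1 hy))]

noncomputable def gg (t x : ℝ) : ℝ := t⁻¹ * p0 (t * x) - 1

lemma hasDerivAt_gg {t : ℝ} (ht : 0 < t) (x : ℝ) : HasDerivAt (gg t) (min (t * x) βc) x := by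
  have h1 : HasDerivAt (fun y : ℝ => t * y) t x := by
    simpa using (hasDerivAt_id x).const_mul t
  have h2 : HasDerivAt (fun y : ℝ => p0 (t * y)) (min (t * x) βc * t) x :=
    (hasDerivAt_p0 (t * x)).comp x h1
  have h3 := (h2.const_mul t⁻¹).sub_const 1
  have : t⁻¹ * (min (t * x) βc * t) = min (t * x) βc := by
    field_simp
  rw [this] at h3
  exact h3

lemma gg_diff {t : ℝ} (ht : 0 < t) : Differentiable ℝ (gg t) :=
  fun x => (hasDerivAt_gg ht x).differentiableAt

lemma gg_deriv {t : ℝ} (ht : 0 < t) (x : ℝ) : deriv (gg t) x = min (t * x) βc :=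
  (hasDerivAt_gg ht x).deriv

lemma gg_strictMono {t : ℝ} (ht : 0 < t) : StrictMonoOn (gg t) (Set.Ici 0) := by
  refine strictMonoOn_of_deriv_pos (convex_Ici 0) ((gg_diff ht).continuous.continuousOn) ?_
  intro x hx
  rw [interior_Ici] at hx
  rw [gg_deriv ht]
  exact lt_min (mul_pos ht hx) βc_pos

lemma theta_eq (t l : ℝ) : θ t l = max 0 (gg t |l|) := rfl

lemma gg_convex {t : ℝ} (ht : 0 < t) : ConvexOn ℝ Set.univ (gg t) := by
  refine Monotone.convexOn_univ_of_deriv (gg_diff ht) ?_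
  intro a b hab
  rw [gg_deriv ht, gg_deriv ht]
  exact min_le_min (mul_le_mul_of_nonneg_left hab ht.le) le_rfl

lemma abs_image_univ : (fun x : ℝ => |x|) '' (Set.univ : Set ℝ) = Set.Ici 0 := by
  rw [Set.image_univ]
  ext y
  simp only [Set.mem_range, Set.mem_Ici]
  constructor
  · rintro ⟨x, rfl⟩; exact abs_nonneg x
  · intro hy; exact ⟨y, abs_of_nonneg hy⟩

lemma convexOn_abs' : ConvexOn ℝ (Set.univ : Set ℝ) (fun x : ℝ => |x|) := by
  refine ⟨convex_univ, fun x _ y _ a b ha hb _ => ?_⟩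
  simp only [smul_eq_mul]
  calc |a * x + b * y| ≤ |a * x| + |b * y| := abs_add_le _ _
    _ = a * |x| + b * |y| := by rw [abs_mul, abs_mul, abs_of_nonneg ha, abs_of_nonneg hb]

lemma theta_convex {t : ℝ} (ht : 0 < t) : ConvexOn ℝ Set.univ (θ t) := by
  have hcomp : ConvexOn ℝ Set.univ (gg t ∘ fun x : ℝ => |x|) := by
    refine ConvexOn.comp ?_ convexOn_abs' ?_
    · rw [abs_image_univ]
      exact (gg_convex ht).subset (Set.subset_univ _) (convex_Ici 0)
    · rw [abs_image_univ]
      exact (gg_strictMono ht).monotoneOn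
  have h2 := (convexOn_const (0 : ℝ) convex_univ).sup hcomp
  have h3 : θ t = (fun _ : ℝ => (0 : ℝ)) ⊔ (gg t ∘ fun x : ℝ => |x|) := rfl
  rw [h3]
  exact h2

/-- For any `t > 0`, `θ(t,·)` is even and convex, differentiable away from the
first-order transition points `±λ*`, and at `λ*` the left derivative is `0` while
the right derivative is strictly positive. -/
theorem stmt15 (t : ℝ) (ht : 0 < t) :
    (∀ l : ℝ, θ t (-l) = θ t l) ∧ ConvexOn ℝ Set.univ (θ t) ∧
    (∀ lstar : ℝ,
      lstar = (if βc ^ 2 / 2 ≤ t then βc / (2 * t) + 1 / βc else Real.sqrt (2 / t)) →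
      (∀ l : ℝ, |l| ≠ lstar → DifferentiableAt ℝ (θ t) l) ∧
      HasDerivWithinAt (θ t) 0 (Set.Iic lstar) lstar ∧
      ∃ d > 0, HasDerivWithinAt (θ t) d (Set.Ici lstar) lstar) := by
  refine ⟨fun l => by simp [θ, abs_neg], theta_convex ht, ?_⟩
  intro L hL
  -- basic facts about L
  have hbc := βc_pos
  have hbsq := βc_sq
  have hL0 : 0 < L := by
    rw [hL]
    split_ifs
    · positivity
    · exact Real.sqrt_pos.2 (by positivity)
  have hpL : p0 (t * L) = t := by
    rw [hL]
    split_ifs with hcase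
    · -- t ≥ βc^2/2
      have htL : t * (βc / (2 * t) + 1 / βc) = βc / 2 + t / βc := by
        field_simp
      rw [htL]
      rcases le_or_gt (βc / 2 + t / βc) βc with h1 | h1
      · have h1a : t / βc ≤ βc / 2 := by linarith
        have ht2 : t ≤ βc ^ 2 / 2 := by
          have h1b := (div_le_iff₀ hbc).1 h1a
          nlinarith
        have ht3 : t = βc ^ 2 / 2 := le_antisymm ht2 hcase
        have hx : βc / 2 + t / βc = βc := by
          rw [ht3]; field_simp; ring
        rw [hx]
        simp only [p0, if_pos le_rfl]
        linarith
      · simp only [p0, if_neg (not_le.2 h1)]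
        have hexp : (βc / 2 + t / βc) * βc = βc ^ 2 / 2 + t := by
          field_simp
        rw [hexp]
        linarith
    · -- t < βc^2/2
      push_neg at hcase
      have h2t : (0:ℝ) ≤ 2 / t := by positivity
      have hs : Real.sqrt (2 / t) ^ 2 = 2 / t := Real.sq_sqrt h2t
      have htL2 : (t * Real.sqrt (2 / t)) ^ 2 = 2 * t := by
        rw [mul_pow, hs]
        field_simp
      have htL0 : 0 ≤ t * Real.sqrt (2 / t) := by positivity
      have hle : t * Real.sqrt (2 / t) ≤ βc := by
        by_contra hcon
        push_neg at hcon
        have hsq : βc ^ 2 < (t * Real.sqrt (2 / t)) ^ 2 := by nlinarith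
        rw [htL2] at hsq
        nlinarith
      simp only [p0, if_pos hle]
      rw [htL2]
      ring
  have hggL : gg t L = 0 := by
    show t⁻¹ * p0 (t * L) - 1 = 0
    rw [hpL, inv_mul_cancel₀ ht.ne', sub_self]
  have hmono := (gg_strictMono ht).monotoneOn
  -- θ = 0 on [-L, L]
  have hzero : ∀ y : ℝ, |y| ≤ L → θ t y = 0 := by
    intro y hy
    rw [theta_eq]
    have : gg t |y| ≤ gg t L := hmono (abs_nonneg y) hL0.le hy
    rw [hggL] at this
    exact max_eq_left this
  have hcontabs : Continuous fun y : ℝ => gg t |y| :=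
    (gg_diff ht).continuous.comp continuous_abs
  constructor
  · -- differentiability away from ±L
    intro l hl
    rcases lt_or_gt_of_ne hl with hlt | hgt
    · -- |l| < L : locally zero
      have hlt' : gg t |l| < 0 := by
        rw [← hggL]
        exact (gg_strictMono ht) (abs_nonneg l) hL0.le hlt
      have hev : ∀ᶠ y in nhds l, gg t |y| < 0 :=
        (isOpen_Iio.preimage hcontabs).eventually_mem (show gg t |l| ∈ Set.Iio 0 from hlt')
      have heq : θ t =ᶠ[nhds l] fun _ => (0 : ℝ) := by
        filter_upwards [hev] with y hy
        rw [theta_eq]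
        exact max_eq_left hy.le
      exact heq.differentiableAt_iff.2 (differentiableAt_const 0)
    · -- |l| > L
      have hpos : 0 < gg t |l| := by
        rw [← hggL]
        exact (gg_strictMono ht) hL0.le (abs_nonneg l) hgt
      have hev : ∀ᶠ y in nhds l, 0 < gg t |y| :=
        (isOpen_Ioi.preimage hcontabs).eventually_mem (show gg t |l| ∈ Set.Ioi 0 from hpos)
      have hl0 : l ≠ 0 := by
        intro h
        rw [h] at hgt
        simp at hgt
        exact absurd hgt (not_lt.2 hL0.le)
      rcases hl0.lt_or_gt with hneg | hposl
      · have hev2 : ∀ᶠ y in nhds l, y < 0 := isOpen_Iio.eventually_mem hneg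
        have heq : θ t =ᶠ[nhds l] fun y => gg t (-y) := by
          filter_upwards [hev, hev2] with y hy hy2
          rw [theta_eq, abs_of_neg hy2] at *
          exact max_eq_right hy.le
        refine heq.differentiableAt_iff.2 ?_
        exact ((gg_diff ht) (-l)).comp l differentiableAt_id.neg
      · have hev2 : ∀ᶠ y in nhds l, 0 < y := isOpen_Ioi.eventually_mem hposl
        have heq : θ t =ᶠ[nhds l] gg t := by
          filter_upwards [hev, hev2] with y hy hy2
          rw [theta_eq, abs_of_pos hy2] at *
          exact max_eq_right hy.le
        exact heq.differentiableAt_iff.2 ((gg_diff ht) l)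
  constructor
  · -- left derivative 0
    have hc : HasDerivWithinAt (fun _ : ℝ => (0:ℝ)) 0 (Set.Iic L) L :=
      (hasDerivWithinAt_const L _ 0)
    refine hc.congr_of_eventuallyEq ?_ ?_
    · have hmem : ∀ᶠ y in nhdsWithin L (Set.Iic L), y ∈ Set.Iic L :=
        eventually_mem_nhdsWithin
      have hball : ∀ᶠ y in nhdsWithin L (Set.Iic L), -L < y :=
        eventually_nhdsWithin_of_eventually_nhds
          (isOpen_Ioi.eventually_mem (Set.mem_Ioi.2 (by linarith)))
      filter_upwards [hmem, hball] with y hy hy2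
      exact hzero y (abs_le.2 ⟨hy2.le, hy⟩)
    · exact hzero L (by rw [abs_of_pos hL0])
  · -- right derivative
    refine ⟨min (t * L) βc, lt_min (by positivity) βc_pos, ?_⟩
    have hd := (hasDerivAt_gg ht L).hasDerivWithinAt (s := Set.Ici L)
    refine hd.congr (fun y hy => ?_) ?_
    · have hyL : L ≤ y := hy
      have hy0 : 0 < y := lt_of_lt_of_le hL0 hyL
      have hgy : 0 ≤ gg t y := by
        rw [← hggL]
        exact hmono hL0.le hy0.le hyL
      rw [theta_eq, abs_of_pos hy0]
      exact max_eq_right hgy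
    · rw [theta_eq, abs_of_pos hL0, hggL]
      simp
end
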